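/- arXiv:2302.12857 — 2 statements merged into one kernel-verified Lean document; each statement's English description precedes it below -/
import Mathlib

section
/- Let Ñ be a prime and a₀, a₁, a₂, a₃ : ℤ/Ñℤ → ℂ functions with ‖a_i‖_∞ ≤ 1, and let l₁, l₂, l₃ be distinct positive integers with l₁+l₂+l₃ < Ñ. Then |𝔼_{m,n ∈ ℤ/Ñℤ} a₀(m) a₁(m+l₁n) a₂(m+l₂n) a₃(m+l₃n)| ≤ min_{0≤j≤3} ‖a_j‖_{U³(ℤ/Ñℤ)}. -/
open Finset Complex
set_option maxHeartbeats 1000000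

local notation "conj'" => starRingEnd ℂ

/-- The `2^d`-th power of the Gowers `U^d` norm of `f : G → ℂ`. -/
noncomputable def gowersExpr {G : Type*} [AddCommGroup G] [Fintype G] [DecidableEq G]
    (d : ℕ) (f : G → ℂ) : ℂ :=
  (∑ x : G, ∑ h : Fin d → G, ∏ ω : Fin d → Bool,
      (if (∑ i, if ω i then 1 else 0) % 2 = 0 then
        f (x + ∑ i, if ω i then h i else 0)
      else
        starRingEnd ℂ (f (x + ∑ i, if ω i then h i else 0)))) /
    (Fintype.card G : ℂ) ^ (d + 1)

/-- The Gowers `U^d` norm `‖f‖_{U^d}`. -/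
noncomputable def gowersNorm {G : Type*} [AddCommGroup G] [Fintype G] [DecidableEq G]
    (d : ℕ) (f : G → ℂ) : ℝ :=
  (gowersExpr d f).re ^ ((1 : ℝ) / 2 ^ d)

namespace GVN

lemma cs_step {A B : Type*} [Fintype A] [Fintype B] (g : A → ℂ) (F : A → B → ℂ)
    (hg : ∀ a, ‖g a‖ ≤ 1) :
    ‖∑ a, g a * ∑ b, F a b‖ ^ 2 ≤
      (Fintype.card A : ℝ) * ‖∑ a, ∑ b, ∑ b', F a b * conj' (F a b')‖ := by
  have key : (∑ a, ∑ b, ∑ b', F a b * conj' (F a b'))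
      = ((∑ a, ‖∑ b, F a b‖ ^ 2 : ℝ) : ℂ) := by
    push_cast
    refine Finset.sum_congr rfl fun a _ => ?_
    rw [← Finset.sum_mul_sum, ← map_sum, Complex.mul_conj']
  rw [key]
  rw [Complex.norm_real, Real.norm_of_nonneg (by positivity)]
  have h1 : ‖∑ a, g a * ∑ b, F a b‖ ≤ ∑ a, ‖∑ b, F a b‖ := by
    refine (norm_sum_le _ _).trans (Finset.sum_le_sum fun a _ => ?_)
    rw [norm_mul]
    exact mul_le_of_le_one_left (norm_nonneg _) (hg a)
  calc ‖∑ a, g a * ∑ b, F a b‖ ^ 2 ≤ (∑ a, ‖∑ b, F a b‖) ^ 2 := by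
        apply pow_le_pow_left₀ (norm_nonneg _) h1
    _ ≤ (Fintype.card A : ℝ) * ∑ a, ‖∑ b, F a b‖ ^ 2 := by
        simpa using sq_sum_le_card_mul_sum_sq (s := (Finset.univ : Finset A))
          (f := fun a => ‖∑ b, F a b‖)

lemma sum2_bij {K : Type*} [Fintype K] (e : K × K → K × K) (he : Function.Bijective e)
    (f g : K → K → ℂ)
    (h : ∀ a b, g a b = f (e (a, b)).1 (e (a, b)).2) :
    (∑ a, ∑ b, f a b) = ∑ a, ∑ b, g a b := by
  have := Fintype.sum_bijective e he (fun p => g p.1 p.2)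
    (fun p => f p.1 p.2) (fun p => h p.1 p.2)
  simpa [Fintype.sum_prod_type] using this.symm

lemma sum3_bij {K : Type*} [Fintype K] (e : K × K × K → K × K × K)
    (he : Function.Bijective e) (f g : K → K → K → ℂ)
    (h : ∀ a b c, g a b c = f (e (a,b,c)).1 (e (a,b,c)).2.1 (e (a,b,c)).2.2) :
    (∑ a, ∑ b, ∑ c, f a b c) = ∑ a, ∑ b, ∑ c, g a b c := by
  have := Fintype.sum_bijective e he (fun p => g p.1 p.2.1 p.2.2)
    (fun p => f p.1 p.2.1 p.2.2) (fun p => h p.1 p.2.1 p.2.2)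
  simpa [Fintype.sum_prod_type] using this.symm

lemma sum4_bij {K : Type*} [Fintype K] (e : K × K × K × K → K × K × K × K)
    (he : Function.Bijective e) (f g : K → K → K → K → ℂ)
    (h : ∀ a b c d, g a b c d =
      f (e (a,b,c,d)).1 (e (a,b,c,d)).2.1 (e (a,b,c,d)).2.2.1 (e (a,b,c,d)).2.2.2) :
    (∑ a, ∑ b, ∑ c, ∑ d, f a b c d) = ∑ a, ∑ b, ∑ c, ∑ d, g a b c d := by
  have := Fintype.sum_bijective e he (fun p => g p.1 p.2.1 p.2.2.1 p.2.2.2)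
    (fun p => f p.1 p.2.1 p.2.2.1 p.2.2.2) (fun p => h p.1 p.2.1 p.2.2.1 p.2.2.2)
  simpa [Fintype.sum_prod_type] using this.symm

lemma sum5_bij {K : Type*} [Fintype K] (e : K × K × K × K × K → K × K × K × K × K)
    (he : Function.Bijective e) (f g : K → K → K → K → K → ℂ)
    (h : ∀ a b c d i, g a b c d i =
      f (e (a,b,c,d,i)).1 (e (a,b,c,d,i)).2.1 (e (a,b,c,d,i)).2.2.1
        (e (a,b,c,d,i)).2.2.2.1 (e (a,b,c,d,i)).2.2.2.2) :
    (∑ a, ∑ b, ∑ c, ∑ d, ∑ i, f a b c d i) = ∑ a, ∑ b, ∑ c, ∑ d, ∑ i, g a b c d i := by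
  have := Fintype.sum_bijective e he (fun p => g p.1 p.2.1 p.2.2.1 p.2.2.2.1 p.2.2.2.2)
    (fun p => f p.1 p.2.1 p.2.2.1 p.2.2.2.1 p.2.2.2.2)
    (fun p => h p.1 p.2.1 p.2.2.1 p.2.2.2.1 p.2.2.2.2)
  simpa [Fintype.sum_prod_type] using this.symm

def e3 (α : Type*) : α × α × α ≃ (Fin 3 → α) where
  toFun p := ![p.1, p.2.1, p.2.2]
  invFun h := (h 0, h 1, h 2)
  left_inv := by rintro ⟨a,b,c⟩; simp
  right_inv := by intro h; funext i; fin_cases i <;> simp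

lemma gowersExpr_three {K : Type*} [AddCommGroup K] [Fintype K] [DecidableEq K] (f : K → ℂ) :
    gowersExpr 3 f = (∑ x : K, ∑ h₁ : K, ∑ h₂ : K, ∑ h₃ : K,
      f x * conj' (f (x+h₁)) * conj' (f (x+h₂)) * f (x+h₁+h₂) *
      conj' (f (x+h₃)) * f (x+h₁+h₃) * f (x+h₂+h₃) * conj' (f (x+h₁+h₂+h₃)))
      / (Fintype.card K : ℂ) ^ 4 := by
  unfold gowersExpr
  congr 1
  refine Finset.sum_congr rfl fun x _ => ?_
  rw [← Equiv.sum_comp (e3 K)]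
  simp only [Fintype.sum_prod_type]
  refine Finset.sum_congr rfl fun h₁ _ => Finset.sum_congr rfl fun h₂ _ =>
    Finset.sum_congr rfl fun h₃ _ => ?_
  rw [← Equiv.prod_comp (e3 Bool)]
  simp only [Fintype.prod_prod_type, Fintype.prod_bool, e3, Equiv.coe_fn_mk,
    Fin.sum_univ_three, Matrix.cons_val_zero, Matrix.cons_val_one, Matrix.head_cons,
    Matrix.cons_val_two, Matrix.tail_cons]
  norm_num
  simp only [add_assoc]
  ring_nf


lemma core {K : Type*} [Field K] [Fintype K] [DecidableEq K] (f₀ f₁ f₂ f₃ : K → ℂ)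
    (hb₁ : ∀ m, ‖f₁ m‖ ≤ 1) (hb₂ : ∀ m, ‖f₂ m‖ ≤ 1) (hb₃ : ∀ m, ‖f₃ m‖ ≤ 1)
    (c₁ c₂ c₃ : K)
    (hc₁ : c₁ ≠ 0) (hc₂ : c₂ ≠ 0) (hc₃ : c₃ ≠ 0)
    (h12 : c₁ ≠ c₂) (h13 : c₁ ≠ c₃) (h23 : c₂ ≠ c₃) :
    ‖(∑ m, ∑ n, f₀ m * f₁ (m + c₁*n) * f₂ (m + c₂*n) * f₃ (m + c₃*n)) /
        (Fintype.card K : ℂ)^2‖ ≤ gowersNorm 3 f₀ := by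
  have hN0 : (0:ℝ) < (Fintype.card K : ℝ) := by
    have := Fintype.card_pos (α := K)
    positivity
  -- Step 1 rewrite
  have h1 : (∑ m : K, ∑ n : K, f₀ m * f₁ (m + c₁*n) * f₂ (m + c₂*n) * f₃ (m + c₃*n))
      = ∑ u : K, f₃ u * ∑ n : K,
          (f₀ (u - c₃*n) * f₁ (u + (c₁-c₃)*n) * f₂ (u + (c₂-c₃)*n)) := by
    have hb : Function.Bijective (fun p : K × K => (p.1 - c₃*p.2, p.2)) := by
      refine Function.bijective_iff_has_inverse.mpr
        ⟨fun p => (p.1 + c₃*p.2, p.2), fun p => ?_, fun p => ?_⟩ <;>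
      · obtain ⟨a, b⟩ := p
        simp only [Prod.mk.injEq, -eq_self]
        constructor <;> ring
    have := sum2_bij _ hb
      (fun m n => f₀ m * f₁ (m + c₁*n) * f₂ (m + c₂*n) * f₃ (m + c₃*n))
      (fun u n => f₃ u * (f₀ (u - c₃*n) * f₁ (u + (c₁-c₃)*n) * f₂ (u + (c₂-c₃)*n)))
      (fun u n => by ring_nf)
    rw [this]
    exact Finset.sum_congr rfl fun u _ => (Finset.mul_sum _ _ _).symm
  -- Step 1 Cauchy-Schwarz
  have s1 : ‖∑ u : K, f₃ u * ∑ n : K,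
        (f₀ (u - c₃*n) * f₁ (u + (c₁-c₃)*n) * f₂ (u + (c₂-c₃)*n))‖ ^ 2 ≤
      (Fintype.card K:ℝ) * ‖∑ u : K, ∑ n : K, ∑ n' : K,
        (f₀ (u - c₃*n) * f₁ (u + (c₁-c₃)*n) * f₂ (u + (c₂-c₃)*n)) *
          conj' (f₀ (u - c₃*n') * f₁ (u + (c₁-c₃)*n') * f₂ (u + (c₂-c₃)*n'))‖ := by
    have := cs_step (A := K) (B := K) f₃
      (fun u n => f₀ (u - c₃*n) * f₁ (u + (c₁-c₃)*n) * f₂ (u + (c₂-c₃)*n)) hb₃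
    simpa only [] using this
  -- Step 2 rewrite
  have h2 : (∑ u : K, ∑ n : K, ∑ n' : K,
        (f₀ (u - c₃*n) * f₁ (u + (c₁-c₃)*n) * f₂ (u + (c₂-c₃)*n)) *
          conj' (f₀ (u - c₃*n') * f₁ (u + (c₁-c₃)*n') * f₂ (u + (c₂-c₃)*n')))
      = ∑ v : K, ∑ k : K, (f₂ v * conj' (f₂ (v + (c₂-c₃)*k))) * ∑ n : K,
          (f₀ (v - c₂*n) * conj' (f₀ (v - c₂*n - c₃*k)) *
            f₁ (v - (c₂-c₁)*n) * conj' (f₁ (v - (c₂-c₁)*n + (c₁-c₃)*k))) := by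
    have hb : Function.Bijective
        (fun p : K × K × K => (p.1 - (c₂-c₃)*p.2.2, p.2.2, p.2.2 + p.2.1)) := by
      refine Function.bijective_iff_has_inverse.mpr
        ⟨fun p => (p.1 + (c₂-c₃)*p.2.1, p.2.2 - p.2.1, p.2.1), fun p => ?_, fun p => ?_⟩ <;>
      · obtain ⟨a, b, c⟩ := p
        simp only [Prod.mk.injEq, -eq_self]
        refine ⟨by ring, by ring, by ring⟩
    have := sum3_bij _ hb
      (fun u n n' => (f₀ (u - c₃*n) * f₁ (u + (c₁-c₃)*n) * f₂ (u + (c₂-c₃)*n)) *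
          conj' (f₀ (u - c₃*n') * f₁ (u + (c₁-c₃)*n') * f₂ (u + (c₂-c₃)*n')))
      (fun v k n => (f₂ v * conj' (f₂ (v + (c₂-c₃)*k))) *
          (f₀ (v - c₂*n) * conj' (f₀ (v - c₂*n - c₃*k)) *
            f₁ (v - (c₂-c₁)*n) * conj' (f₁ (v - (c₂-c₁)*n + (c₁-c₃)*k))))
      (fun v k n => by simp only [map_mul]; ring_nf)
    rw [this]
    exact Finset.sum_congr rfl fun v _ => Finset.sum_congr rfl fun k _ =>
      (Finset.mul_sum _ _ _).symm
  -- Step 2 Cauchy-Schwarz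
  have s2 : ‖∑ v : K, ∑ k : K, (f₂ v * conj' (f₂ (v + (c₂-c₃)*k))) * ∑ n : K,
        (f₀ (v - c₂*n) * conj' (f₀ (v - c₂*n - c₃*k)) *
          f₁ (v - (c₂-c₁)*n) * conj' (f₁ (v - (c₂-c₁)*n + (c₁-c₃)*k)))‖ ^ 2 ≤
      (Fintype.card K:ℝ)^2 * ‖∑ v : K, ∑ k : K, ∑ n : K, ∑ n' : K,
        (f₀ (v - c₂*n) * conj' (f₀ (v - c₂*n - c₃*k)) *
          f₁ (v - (c₂-c₁)*n) * conj' (f₁ (v - (c₂-c₁)*n + (c₁-c₃)*k))) *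
        conj' (f₀ (v - c₂*n') * conj' (f₀ (v - c₂*n' - c₃*k)) *
          f₁ (v - (c₂-c₁)*n') * conj' (f₁ (v - (c₂-c₁)*n' + (c₁-c₃)*k)))‖ := by
    have := cs_step (A := K × K) (B := K)
      (fun p => f₂ p.1 * conj' (f₂ (p.1 + (c₂-c₃)*p.2)))
      (fun p n => f₀ (p.1 - c₂*n) * conj' (f₀ (p.1 - c₂*n - c₃*p.2)) *
          f₁ (p.1 - (c₂-c₁)*n) * conj' (f₁ (p.1 - (c₂-c₁)*n + (c₁-c₃)*p.2)))
      (fun p => by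
        rw [norm_mul, RCLike.norm_conj]
        exact mul_le_one₀ (hb₂ _) (norm_nonneg _) (hb₂ _))
    have hcast : ((Fintype.card (K × K) : ℝ)) = (Fintype.card K:ℝ)^2 := by
      simp [Fintype.card_prod]; ring
    rw [hcast] at this
    simpa only [Fintype.sum_prod_type] using this
  -- Step 3 rewrite
  have h3 : (∑ v : K, ∑ k : K, ∑ n : K, ∑ n' : K,
        (f₀ (v - c₂*n) * conj' (f₀ (v - c₂*n - c₃*k)) *
          f₁ (v - (c₂-c₁)*n) * conj' (f₁ (v - (c₂-c₁)*n + (c₁-c₃)*k))) *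
        conj' (f₀ (v - c₂*n') * conj' (f₀ (v - c₂*n' - c₃*k)) *
          f₁ (v - (c₂-c₁)*n') * conj' (f₁ (v - (c₂-c₁)*n' + (c₁-c₃)*k))))
      = ∑ w : K, ∑ k : K, ∑ j : K,
          (f₁ w * conj' (f₁ (w + (c₁-c₃)*k)) * conj' (f₁ (w - (c₂-c₁)*j)) *
            f₁ (w - (c₂-c₁)*j + (c₁-c₃)*k)) * ∑ n : K,
          (f₀ (w - c₁*n) * conj' (f₀ (w - c₁*n - c₃*k)) *
            conj' (f₀ (w - c₁*n - c₂*j)) * f₀ (w - c₁*n - c₂*j - c₃*k)) := by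
    have hb : Function.Bijective (fun p : K × K × K × K =>
        (p.1 + (c₂-c₁)*p.2.2.2, p.2.1, p.2.2.2, p.2.2.2 + p.2.2.1)) := by
      refine Function.bijective_iff_has_inverse.mpr
        ⟨fun p => (p.1 - (c₂-c₁)*p.2.2.1, p.2.1, p.2.2.2 - p.2.2.1, p.2.2.1),
          fun p => ?_, fun p => ?_⟩ <;>
      · obtain ⟨a, b, c, d⟩ := p
        simp only [Prod.mk.injEq, -eq_self]
        refine ⟨by ring, by ring, by ring, by ring⟩
    have := sum4_bij _ hb
      (fun v k n n' => (f₀ (v - c₂*n) * conj' (f₀ (v - c₂*n - c₃*k)) *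
          f₁ (v - (c₂-c₁)*n) * conj' (f₁ (v - (c₂-c₁)*n + (c₁-c₃)*k))) *
        conj' (f₀ (v - c₂*n') * conj' (f₀ (v - c₂*n' - c₃*k)) *
          f₁ (v - (c₂-c₁)*n') * conj' (f₁ (v - (c₂-c₁)*n' + (c₁-c₃)*k))))
      (fun w k j n => (f₁ w * conj' (f₁ (w + (c₁-c₃)*k)) * conj' (f₁ (w - (c₂-c₁)*j)) *
            f₁ (w - (c₂-c₁)*j + (c₁-c₃)*k)) *
          (f₀ (w - c₁*n) * conj' (f₀ (w - c₁*n - c₃*k)) *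
            conj' (f₀ (w - c₁*n - c₂*j)) * f₀ (w - c₁*n - c₂*j - c₃*k)))
      (fun w k j n => by simp only [map_mul, Complex.conj_conj]; ring_nf)
    rw [this]
    exact Finset.sum_congr rfl fun w _ => Finset.sum_congr rfl fun k _ =>
      Finset.sum_congr rfl fun j _ => (Finset.mul_sum _ _ _).symm
  -- Step 3 Cauchy-Schwarz
  have s3 : ‖∑ w : K, ∑ k : K, ∑ j : K,
        (f₁ w * conj' (f₁ (w + (c₁-c₃)*k)) * conj' (f₁ (w - (c₂-c₁)*j)) *
          f₁ (w - (c₂-c₁)*j + (c₁-c₃)*k)) * ∑ n : K,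
        (f₀ (w - c₁*n) * conj' (f₀ (w - c₁*n - c₃*k)) *
          conj' (f₀ (w - c₁*n - c₂*j)) * f₀ (w - c₁*n - c₂*j - c₃*k))‖ ^ 2 ≤
      (Fintype.card K:ℝ)^3 * ‖∑ w : K, ∑ k : K, ∑ j : K, ∑ n : K, ∑ n' : K,
        (f₀ (w - c₁*n) * conj' (f₀ (w - c₁*n - c₃*k)) *
          conj' (f₀ (w - c₁*n - c₂*j)) * f₀ (w - c₁*n - c₂*j - c₃*k)) *
        conj' (f₀ (w - c₁*n') * conj' (f₀ (w - c₁*n' - c₃*k)) *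
          conj' (f₀ (w - c₁*n' - c₂*j)) * f₀ (w - c₁*n' - c₂*j - c₃*k))‖ := by
    have := cs_step (A := K × K × K) (B := K)
      (fun p => f₁ p.1 * conj' (f₁ (p.1 + (c₁-c₃)*p.2.1)) *
          conj' (f₁ (p.1 - (c₂-c₁)*p.2.2)) * f₁ (p.1 - (c₂-c₁)*p.2.2 + (c₁-c₃)*p.2.1))
      (fun p n => f₀ (p.1 - c₁*n) * conj' (f₀ (p.1 - c₁*n - c₃*p.2.1)) *
          conj' (f₀ (p.1 - c₁*n - c₂*p.2.2)) * f₀ (p.1 - c₁*n - c₂*p.2.2 - c₃*p.2.1))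
      (fun p => by
        simp only [norm_mul, RCLike.norm_conj]
        exact mul_le_one₀ (mul_le_one₀ (mul_le_one₀ (hb₁ _) (norm_nonneg _) (hb₁ _))
          (norm_nonneg _) (hb₁ _)) (norm_nonneg _) (hb₁ _))
    have hcast : ((Fintype.card (K × K × K) : ℝ)) = (Fintype.card K:ℝ)^3 := by
      simp [Fintype.card_prod]; ring
    rw [hcast] at this
    simpa only [Fintype.sum_prod_type] using this
  -- Step 4: identify with Gowers expression
  have h4 : (∑ w : K, ∑ k : K, ∑ j : K, ∑ n : K, ∑ n' : K,
        (f₀ (w - c₁*n) * conj' (f₀ (w - c₁*n - c₃*k)) *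
          conj' (f₀ (w - c₁*n - c₂*j)) * f₀ (w - c₁*n - c₂*j - c₃*k)) *
        conj' (f₀ (w - c₁*n') * conj' (f₀ (w - c₁*n' - c₃*k)) *
          conj' (f₀ (w - c₁*n' - c₂*j)) * f₀ (w - c₁*n' - c₂*j - c₃*k)))
      = (Fintype.card K:ℂ) * ∑ x : K, ∑ h₁ : K, ∑ h₂ : K, ∑ h₃ : K,
          (f₀ x * conj' (f₀ (x+h₁)) * conj' (f₀ (x+h₂)) * f₀ (x+h₁+h₂) *
            conj' (f₀ (x+h₃)) * f₀ (x+h₁+h₃) * f₀ (x+h₂+h₃) * conj' (f₀ (x+h₁+h₂+h₃))) := by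
    have hb5 : Function.Bijective (fun p : K × K × K × K × K =>
        (p.1 + c₁*p.2.2.2.2, p.2.1, p.2.2.1, p.2.2.2.2, p.2.2.2.2 + p.2.2.2.1)) := by
      refine Function.bijective_iff_has_inverse.mpr
        ⟨fun p => (p.1 - c₁*p.2.2.2.1, p.2.1, p.2.2.1, p.2.2.2.2 - p.2.2.2.1, p.2.2.2.1),
          fun p => ?_, fun p => ?_⟩ <;>
      · obtain ⟨a, b, c, d, i⟩ := p
        simp only [Prod.mk.injEq, -eq_self]
        refine ⟨by ring, by ring, by ring, by ring, by ring⟩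
    have e5 := sum5_bij _ hb5
      (fun w k j n n' => (f₀ (w - c₁*n) * conj' (f₀ (w - c₁*n - c₃*k)) *
          conj' (f₀ (w - c₁*n - c₂*j)) * f₀ (w - c₁*n - c₂*j - c₃*k)) *
        conj' (f₀ (w - c₁*n') * conj' (f₀ (w - c₁*n' - c₃*k)) *
          conj' (f₀ (w - c₁*n' - c₂*j)) * f₀ (w - c₁*n' - c₂*j - c₃*k)))
      (fun x k j t _n => f₀ x * conj' (f₀ (x + -(c₃*k))) * conj' (f₀ (x + -(c₂*j))) *
          f₀ (x + -(c₃*k) + -(c₂*j)) * conj' (f₀ (x + -(c₁*t))) *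
          f₀ (x + -(c₃*k) + -(c₁*t)) * f₀ (x + -(c₂*j) + -(c₁*t)) *
          conj' (f₀ (x + -(c₃*k) + -(c₂*j) + -(c₁*t))))
      (fun x k j t n => by simp only [map_mul, Complex.conj_conj]; ring_nf)
    rw [e5]
    have hconst : ∀ x k j t : K, (∑ _n : K, (f₀ x * conj' (f₀ (x + -(c₃*k))) *
        conj' (f₀ (x + -(c₂*j))) * f₀ (x + -(c₃*k) + -(c₂*j)) * conj' (f₀ (x + -(c₁*t))) *
        f₀ (x + -(c₃*k) + -(c₁*t)) * f₀ (x + -(c₂*j) + -(c₁*t)) *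
        conj' (f₀ (x + -(c₃*k) + -(c₂*j) + -(c₁*t)))))
        = (Fintype.card K:ℂ) * (f₀ x * conj' (f₀ (x + -(c₃*k))) *
        conj' (f₀ (x + -(c₂*j))) * f₀ (x + -(c₃*k) + -(c₂*j)) * conj' (f₀ (x + -(c₁*t))) *
        f₀ (x + -(c₃*k) + -(c₁*t)) * f₀ (x + -(c₂*j) + -(c₁*t)) *
        conj' (f₀ (x + -(c₃*k) + -(c₂*j) + -(c₁*t)))) := by
      intro x k j t
      rw [Finset.sum_const, Finset.card_univ, nsmul_eq_mul]
    simp only [hconst, ← Finset.mul_sum]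
    refine congrArg _ ?_
    have hb4 : Function.Bijective (fun p : K × K × K × K =>
        (p.1, -(c₃*p.2.1), -(c₂*p.2.2.1), -(c₁*p.2.2.2))) := by
      refine Function.bijective_iff_has_inverse.mpr
        ⟨fun p => (p.1, -(c₃⁻¹*p.2.1), -(c₂⁻¹*p.2.2.1), -(c₁⁻¹*p.2.2.2)),
          fun p => ?_, fun p => ?_⟩ <;>
      · obtain ⟨a, b, c, d⟩ := p
        simp only [Prod.mk.injEq, -eq_self]
        refine ⟨?_, ?_, ?_, ?_⟩ <;> field_simp
    exact (sum4_bij _ hb4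
      (fun x h₁ h₂ h₃ => f₀ x * conj' (f₀ (x+h₁)) * conj' (f₀ (x+h₂)) * f₀ (x+h₁+h₂) *
          conj' (f₀ (x+h₃)) * f₀ (x+h₁+h₃) * f₀ (x+h₂+h₃) * conj' (f₀ (x+h₁+h₂+h₃)))
      (fun x k j t => f₀ x * conj' (f₀ (x + -(c₃*k))) * conj' (f₀ (x + -(c₂*j))) *
          f₀ (x + -(c₃*k) + -(c₂*j)) * conj' (f₀ (x + -(c₁*t))) *
          f₀ (x + -(c₃*k) + -(c₁*t)) * f₀ (x + -(c₂*j) + -(c₁*t)) *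
          conj' (f₀ (x + -(c₃*k) + -(c₂*j) + -(c₁*t))))
      (fun x k j t => rfl)).symm
  -- positivity: the Gowers sum is a nonnegative real
  set ρ : ℝ := ∑ h₁ : K, ∑ h₂ : K,
    ‖∑ x : K, f₀ x * conj' (f₀ (x+h₁)) * conj' (f₀ (x+h₂)) * f₀ (x+h₁+h₂)‖^2 with hρdef
  have hρ0 : 0 ≤ ρ := by positivity
  have hU : (∑ x : K, ∑ h₁ : K, ∑ h₂ : K, ∑ h₃ : K,
      (f₀ x * conj' (f₀ (x+h₁)) * conj' (f₀ (x+h₂)) * f₀ (x+h₁+h₂) *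
        conj' (f₀ (x+h₃)) * f₀ (x+h₁+h₃) * f₀ (x+h₂+h₃) * conj' (f₀ (x+h₁+h₂+h₃))))
      = ((ρ : ℝ) : ℂ) := by
    have hperm : Function.Bijective (fun p : K × K × K × K =>
        (p.2.2.1, p.1, p.2.1, p.2.2.2)) := by
      refine Function.bijective_iff_has_inverse.mpr
        ⟨fun p => (p.2.1, p.2.2.1, p.1, p.2.2.2), fun p => rfl, fun p => rfl⟩
    have hreorder := sum4_bij _ hperm
      (fun x h₁ h₂ h₃ => f₀ x * conj' (f₀ (x+h₁)) * conj' (f₀ (x+h₂)) * f₀ (x+h₁+h₂) *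
          conj' (f₀ (x+h₃)) * f₀ (x+h₁+h₃) * f₀ (x+h₂+h₃) * conj' (f₀ (x+h₁+h₂+h₃)))
      (fun h₁ h₂ x h₃ => f₀ x * conj' (f₀ (x+h₁)) * conj' (f₀ (x+h₂)) * f₀ (x+h₁+h₂) *
          conj' (f₀ (x+h₃)) * f₀ (x+h₁+h₃) * f₀ (x+h₂+h₃) * conj' (f₀ (x+h₁+h₂+h₃)))
      (fun h₁ h₂ x h₃ => rfl)
    rw [hreorder, hρdef]
    push_cast
    refine Finset.sum_congr rfl fun h₁ _ => Finset.sum_congr rfl fun h₂ _ => ?_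
    have inner : ∀ x : K, (∑ h₃ : K,
        (f₀ x * conj' (f₀ (x+h₁)) * conj' (f₀ (x+h₂)) * f₀ (x+h₁+h₂) *
          conj' (f₀ (x+h₃)) * f₀ (x+h₁+h₃) * f₀ (x+h₂+h₃) * conj' (f₀ (x+h₁+h₂+h₃))))
        = (f₀ x * conj' (f₀ (x+h₁)) * conj' (f₀ (x+h₂)) * f₀ (x+h₁+h₂)) *
          conj' (∑ y : K, f₀ y * conj' (f₀ (y+h₁)) * conj' (f₀ (y+h₂)) * f₀ (y+h₁+h₂)) := by
      intro x
      rw [map_sum, Finset.mul_sum]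
      rw [← Equiv.sum_comp (Equiv.addLeft x)
        (fun y => (f₀ x * conj' (f₀ (x+h₁)) * conj' (f₀ (x+h₂)) * f₀ (x+h₁+h₂)) *
          conj' (f₀ y * conj' (f₀ (y+h₁)) * conj' (f₀ (y+h₂)) * f₀ (y+h₁+h₂)))]
      refine Finset.sum_congr rfl fun h₃ _ => ?_
      simp only [map_mul, Complex.conj_conj, Equiv.coe_addLeft]
      ring_nf
    simp only [inner]
    rw [← Finset.sum_mul, Complex.mul_conj']
  -- chain everything
  have hchain : ∀ a x1 x2 N : ℝ, 0 ≤ a → 0 ≤ x1 → 0 ≤ x2 → 0 ≤ N →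
      a^2 ≤ N * x1 → x1^2 ≤ N^2 * x2 → x2^2 ≤ N^3 * (N * ρ) → a^8 ≤ N^12 * ρ := by
    intro a x1 x2 N ha hx1 hx2 hN hs1 hs2 hs3
    calc a^8 = (a^2)^4 := by ring
      _ ≤ (N * x1)^4 := pow_le_pow_left₀ (by positivity) hs1 4
      _ = N^4 * (x1^2)^2 := by ring
      _ ≤ N^4 * (N^2 * x2)^2 :=
          mul_le_mul_of_nonneg_left (pow_le_pow_left₀ (by positivity) hs2 2) (by positivity)
      _ = N^8 * x2^2 := by ring
      _ ≤ N^8 * (N^3 * (N * ρ)) := mul_le_mul_of_nonneg_left hs3 (by positivity)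
      _ = N^12 * ρ := by ring
  rw [h2] at s1
  rw [h3] at s2
  rw [h4, hU] at s3
  have hval : ‖(Fintype.card K:ℂ) * ((ρ:ℝ):ℂ)‖ = (Fintype.card K:ℝ) * ρ := by
    rw [norm_mul, Complex.norm_natCast, Complex.norm_real, Real.norm_of_nonneg hρ0]
  rw [hval] at s3
  have key : ‖∑ m : K, ∑ n : K, f₀ m * f₁ (m + c₁*n) * f₂ (m + c₂*n) * f₃ (m + c₃*n)‖^8 ≤
      (Fintype.card K:ℝ)^12 * ρ := by
    rw [h1]
    exact hchain _ _ _ _ (norm_nonneg _) (norm_nonneg _) (norm_nonneg _) hN0.le s1 s2 s3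
  have hre : (gowersExpr 3 f₀).re = ρ / (Fintype.card K:ℝ)^4 := by
    have heq : gowersExpr 3 f₀ = ((ρ / (Fintype.card K:ℝ)^4 : ℝ) : ℂ) := by
      rw [gowersExpr_three, hU]
      push_cast
      ring
    rw [heq, Complex.ofReal_re]
  unfold gowersNorm
  rw [hre]
  have hL : ‖(∑ m : K, ∑ n : K, f₀ m * f₁ (m + c₁*n) * f₂ (m + c₂*n) * f₃ (m + c₃*n)) /
      (Fintype.card K:ℂ)^2‖ = ‖∑ m : K, ∑ n : K,
        f₀ m * f₁ (m + c₁*n) * f₂ (m + c₂*n) * f₃ (m + c₃*n)‖ / (Fintype.card K:ℝ)^2 := by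
    rw [norm_div, norm_pow, Complex.norm_natCast]
  rw [hL]
  have hfinal : ∀ a : ℝ, 0 ≤ a → a^8 ≤ (Fintype.card K:ℝ)^12 * ρ →
      a / (Fintype.card K:ℝ)^2 ≤ (ρ / (Fintype.card K:ℝ)^4) ^ ((1:ℝ)/2^3) := by
    intro a ha hkey
    have h8 : (a / (Fintype.card K:ℝ)^2)^8 ≤ ρ / (Fintype.card K:ℝ)^4 := by
      rw [div_pow, div_le_div_iff₀ (by positivity) (by positivity)]
      calc a^8 * (Fintype.card K:ℝ)^4 ≤ ((Fintype.card K:ℝ)^12 * ρ) * (Fintype.card K:ℝ)^4 :=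
            mul_le_mul_of_nonneg_right hkey (by positivity)
        _ = ρ * ((Fintype.card K:ℝ)^2)^8 := by ring
    calc a / (Fintype.card K:ℝ)^2
        = ((a / (Fintype.card K:ℝ)^2)^(8:ℕ))^(((8:ℕ):ℝ)⁻¹) :=
          (Real.pow_rpow_inv_natCast (by positivity) (by norm_num)).symm
      _ ≤ (ρ / (Fintype.card K:ℝ)^4)^(((8:ℕ):ℝ)⁻¹) :=
          Real.rpow_le_rpow (by positivity) h8 (by positivity)
      _ = (ρ / (Fintype.card K:ℝ)^4) ^ ((1:ℝ)/2^3) := by norm_num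
  exact hfinal _ (norm_nonneg _) key

end GVN

/-- Generalized von Neumann estimate: for `Ñ` prime, `1`-bounded `a₀, a₁, a₂, a₃` on
`ℤ/Ñℤ`, and distinct positive integers `l₁, l₂, l₃` with `l₁+l₂+l₃ < Ñ`,
`|𝔼_{m,n} a₀(m) a₁(m+l₁n) a₂(m+l₂n) a₃(m+l₃n)| ≤ min_j ‖a_j‖_{U³}`. -/
theorem stmt14 (Nt : ℕ) [NeZero Nt] (hp : Nt.Prime) (a₀ a₁ a₂ a₃ : ZMod Nt → ℂ)
    (h₀ : ∀ m, ‖a₀ m‖ ≤ 1) (h₁ : ∀ m, ‖a₁ m‖ ≤ 1)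
    (h₂ : ∀ m, ‖a₂ m‖ ≤ 1) (h₃ : ∀ m, ‖a₃ m‖ ≤ 1)
    (l₁ l₂ l₃ : ℕ) (hl₁ : 0 < l₁) (hl₂ : 0 < l₂) (hl₃ : 0 < l₃)
    (h12 : l₁ ≠ l₂) (h13 : l₁ ≠ l₃) (h23 : l₂ ≠ l₃)
    (hsum : l₁ + l₂ + l₃ < Nt) :
    ‖(∑ m : ZMod Nt, ∑ n : ZMod Nt,
        a₀ m * a₁ (m + (l₁ : ZMod Nt) * n) * a₂ (m + (l₂ : ZMod Nt) * n) *
          a₃ (m + (l₃ : ZMod Nt) * n)) / (Nt : ℂ) ^ 2‖ ≤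
      min (min (gowersNorm 3 a₀) (gowersNorm 3 a₁))
        (min (gowersNorm 3 a₂) (gowersNorm 3 a₃)) := by
  haveI := Fact.mk hp
  have hl1N : l₁ < Nt := by omega
  have hl2N : l₂ < Nt := by omega
  have hl3N : l₃ < Nt := by omega
  have hinj : ∀ a b : ℕ, a < Nt → b < Nt → (a : ZMod Nt) = (b : ZMod Nt) → a = b := by
    intro a b ha hb h
    rw [← ZMod.val_cast_of_lt ha, ← ZMod.val_cast_of_lt hb, h]
  have hz1 : (l₁ : ZMod Nt) ≠ 0 := fun h => by
    have := hinj l₁ 0 hl1N (by omega) (by simpa using h); omega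
  have hz2 : (l₂ : ZMod Nt) ≠ 0 := fun h => by
    have := hinj l₂ 0 hl2N (by omega) (by simpa using h); omega
  have hz3 : (l₃ : ZMod Nt) ≠ 0 := fun h => by
    have := hinj l₃ 0 hl3N (by omega) (by simpa using h); omega
  have hd12 : (l₁ : ZMod Nt) ≠ (l₂ : ZMod Nt) := fun h => h12 (hinj _ _ hl1N hl2N h)
  have hd13 : (l₁ : ZMod Nt) ≠ (l₃ : ZMod Nt) := fun h => h13 (hinj _ _ hl1N hl3N h)
  have hd23 : (l₂ : ZMod Nt) ≠ (l₃ : ZMod Nt) := fun h => h23 (hinj _ _ hl2N hl3N h)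
  rw [show ((Nt:ℂ)) = ((Fintype.card (ZMod Nt) : ℂ)) by rw [ZMod.card]]
  have hshear : ∀ c : ZMod Nt, Function.Bijective
      (fun p : ZMod Nt × ZMod Nt => (p.1 - c*p.2, p.2)) := by
    intro c
    refine Function.bijective_iff_has_inverse.mpr
      ⟨fun p => (p.1 + c*p.2, p.2), fun p => ?_, fun p => ?_⟩ <;>
    · obtain ⟨a, b⟩ := p
      simp only [Prod.mk.injEq, -eq_self]
      constructor <;> ring
  refine le_min (le_min ?_ ?_) (le_min ?_ ?_)
  · exact GVN.core a₀ a₁ a₂ a₃ h₁ h₂ h₃ _ _ _ hz1 hz2 hz3 hd12 hd13 hd23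
  · have e1 : (∑ m : ZMod Nt, ∑ n : ZMod Nt, a₀ m * a₁ (m + (l₁:ZMod Nt)*n) *
        a₂ (m + (l₂:ZMod Nt)*n) * a₃ (m + (l₃:ZMod Nt)*n))
        = ∑ m : ZMod Nt, ∑ n : ZMod Nt, a₁ m * a₀ (m + (-(l₁:ZMod Nt))*n) *
          a₂ (m + ((l₂:ZMod Nt)-(l₁:ZMod Nt))*n) * a₃ (m + ((l₃:ZMod Nt)-(l₁:ZMod Nt))*n) :=
      GVN.sum2_bij _ (hshear (l₁:ZMod Nt)) _ _ (fun m n => by ring_nf)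
    rw [e1]
    exact GVN.core a₁ a₀ a₂ a₃ h₀ h₂ h₃ _ _ _ (neg_ne_zero.mpr hz1)
      (sub_ne_zero.mpr hd12.symm) (sub_ne_zero.mpr hd13.symm)
      (fun h => hz2 (by linear_combination -h)) (fun h => hz3 (by linear_combination -h))
      (fun h => hd23 (by linear_combination h))
  · have e2 : (∑ m : ZMod Nt, ∑ n : ZMod Nt, a₀ m * a₁ (m + (l₁:ZMod Nt)*n) *
        a₂ (m + (l₂:ZMod Nt)*n) * a₃ (m + (l₃:ZMod Nt)*n))
        = ∑ m : ZMod Nt, ∑ n : ZMod Nt, a₂ m * a₀ (m + (-(l₂:ZMod Nt))*n) *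
          a₁ (m + ((l₁:ZMod Nt)-(l₂:ZMod Nt))*n) * a₃ (m + ((l₃:ZMod Nt)-(l₂:ZMod Nt))*n) :=
      GVN.sum2_bij _ (hshear (l₂:ZMod Nt)) _ _ (fun m n => by ring_nf)
    rw [e2]
    exact GVN.core a₂ a₀ a₁ a₃ h₀ h₁ h₃ _ _ _ (neg_ne_zero.mpr hz2)
      (sub_ne_zero.mpr hd12) (sub_ne_zero.mpr hd23.symm)
      (fun h => hz1 (by linear_combination -h)) (fun h => hz3 (by linear_combination -h))
      (fun h => hd13 (by linear_combination h))
  · have e3 : (∑ m : ZMod Nt, ∑ n : ZMod Nt, a₀ m * a₁ (m + (l₁:ZMod Nt)*n) *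
        a₂ (m + (l₂:ZMod Nt)*n) * a₃ (m + (l₃:ZMod Nt)*n))
        = ∑ m : ZMod Nt, ∑ n : ZMod Nt, a₃ m * a₀ (m + (-(l₃:ZMod Nt))*n) *
          a₁ (m + ((l₁:ZMod Nt)-(l₃:ZMod Nt))*n) * a₂ (m + ((l₂:ZMod Nt)-(l₃:ZMod Nt))*n) :=
      GVN.sum2_bij _ (hshear (l₃:ZMod Nt)) _ _ (fun m n => by ring_nf)
    rw [e3]
    exact GVN.core a₃ a₀ a₁ a₂ h₀ h₁ h₂ _ _ _ (neg_ne_zero.mpr hz3)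
      (sub_ne_zero.mpr hd13) (sub_ne_zero.mpr hd23)
      (fun h => hz1 (by linear_combination -h)) (fun h => hz2 (by linear_combination -h))
      (fun h => hd12 (by linear_combination h))
end

section
/- Let E ⊆ ℕ and let (Φ_N) be a multiplicative Følner sequence in (ℕ, ·) with d_mult(E) := limsup_N |E ∩ Φ_N|/|Φ_N| > 0. Then there exist a probability measure-preserving action T of the group (ℚ⁺, ·) on a probability space (X, B, μ) and a measurable set A with μ(A) = d_mult(E), such that for every k ∈ ℕ and n₁, …, n_k ∈ ℕ: d_mult(n₁⁻¹E ∩ … ∩ n_k⁻¹E) ≥ μ(T_{n₁}⁻¹A ∩ … ∩ T_{n_k}⁻¹A). -/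
open MeasureTheory
open scoped symmDiff NNReal ENNReal

/-- The multiplicative (upper) density of `E ⊆ ℕ` relative to the sequence of finite sets
`Φ`: `limsup_N |E ∩ Φ_N| / |Φ_N|`. -/
noncomputable def multDensity (Φ : ℕ → Finset ℕ) (E : Set ℕ) : ℝ :=
  Filter.limsup
    (fun N => (∑ m ∈ Φ N, Set.indicator E (fun _ => (1 : ℝ)) m) / (Φ N).card)
    Filter.atTop

section FurstenbergAux

open Filter Topology TopologicalSpace

/-- The positive rationals. -/
abbrev PosQ : Type := {q : ℚ // 0 < q}

/-- The Cantor-like space on which the system lives. -/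
abbrev CSp : Type := PosQ → Bool

/-- The embedding of `ℕ` into `CSp` recording multiplicative translates of `E`. -/
noncomputable def embX (E : Set ℕ) (m : ℕ) : CSp := fun q =>
  @decide (∃ n : ℕ, (n : ℚ) = (q : ℚ) * m ∧ n ∈ E) (Classical.propDecidable _)

/-- The action of `ℚ⁺` on `CSp`. -/
def TX (q : PosQ) (x : CSp) : CSp := fun r => x (q * r)

/-- The distinguished clopen set. -/
def AX : Set CSp := {x | x 1 = true}

lemma TX_continuous (q : PosQ) : Continuous (TX q) :=
  continuous_pi fun r => continuous_apply (q * r)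

lemma TX_mul (q q' : PosQ) : TX (q * q') = TX q ∘ TX q' := by
  funext x r
  show x ((q * q') * r) = x (q' * (q * r))
  congr 1
  rw [mul_comm q q', mul_assoc]

lemma TX_one : TX 1 = id := by
  funext x r
  show x (1 * r) = x r
  rw [one_mul]

lemma AX_clopen : IsClopen AX :=
  (isClopen_discrete {true}).preimage (continuous_apply (1 : PosQ))

lemma embX_nat (E : Set ℕ) (m a : ℕ) (ha : 0 < a) :
    embX E m ⟨(a : ℚ), by exact_mod_cast ha⟩ = true ↔ a * m ∈ E := by
  simp only [embX, decide_eq_true_iff]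
  constructor
  · rintro ⟨n, hn, hnE⟩
    have hcast : (n : ℚ) = ((a * m : ℕ) : ℚ) := by push_cast; exact hn
    have : n = a * m := Nat.cast_injective hcast
    rwa [this] at hnE
  · intro h
    exact ⟨a * m, by push_cast; ring, h⟩

lemma embX_mem_AX (E : Set ℕ) (m : ℕ) : embX E m ∈ AX ↔ m ∈ E := by
  have h1 : (1 : PosQ) = ⟨((1 : ℕ) : ℚ), by norm_num⟩ := Subtype.ext (by norm_num)
  show embX E m 1 = true ↔ m ∈ E
  rw [h1, embX_nat E m 1 one_pos, one_mul]

lemma TX_embX (E : Set ℕ) (a : ℕ) (ha : 0 < a) (m : ℕ) :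
    TX ⟨(a : ℚ), by exact_mod_cast ha⟩ (embX E m) = embX E (a * m) := by
  funext r
  show embX E m (⟨(a : ℚ), by exact_mod_cast ha⟩ * r) = embX E (a * m) r
  simp only [embX]
  apply decide_eq_decide.mpr
  have hval : ((⟨(a : ℚ), by exact_mod_cast ha⟩ * r : PosQ) : ℚ) = (a : ℚ) * (r : ℚ) := rfl
  rw [hval]
  have harith : ∀ n : ℕ,
      ((n : ℚ) = (a : ℚ) * (r : ℚ) * m ↔ (n : ℚ) = (r : ℚ) * ((a * m : ℕ) : ℚ)) := by
    intro n
    constructor <;> intro h <;> rw [h] <;> push_cast <;> ring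
  exact exists_congr fun n => and_congr_left' (harith n)

/-- Empirical density of a set `S ⊆ CSp` along the orbit points `embX E m`, `m ∈ Φ N`. -/
noncomputable def cnt (Φ : ℕ → Finset ℕ) (E : Set ℕ) (S : Set CSp) (N : ℕ) : ℝ :=
  (∑ m ∈ Φ N, Set.indicator S (fun _ => (1 : ℝ)) (embX E m)) / ((Φ N).card : ℝ)

lemma indicator_one_nonneg (S : Set CSp) (x : CSp) :
    0 ≤ Set.indicator S (fun _ => (1 : ℝ)) x :=
  Set.indicator_nonneg (fun _ _ => zero_le_one) x

lemma indicator_one_le_one (S : Set CSp) (x : CSp) :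
    Set.indicator S (fun _ => (1 : ℝ)) x ≤ 1 := by
  by_cases h : x ∈ S
  · rw [Set.indicator_of_mem h]
  · rw [Set.indicator_of_notMem h]; exact zero_le_one

lemma sum_indicator_le_card (A : Finset ℕ) (g : ℕ → ℝ) (h1 : ∀ x, g x ≤ 1) :
    (∑ m ∈ A, g m) ≤ (A.card : ℝ) := by
  calc (∑ m ∈ A, g m) ≤ A.card • (1 : ℝ) := Finset.sum_le_card_nsmul _ _ 1 (fun x _ => h1 x)
  _ = (A.card : ℝ) := by rw [nsmul_eq_mul, mul_one]

lemma cnt_mem (Φ : ℕ → Finset ℕ) (E : Set ℕ) (S : Set CSp) (N : ℕ) :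
    cnt Φ E S N ∈ Set.Icc (0 : ℝ) 1 := by
  unfold cnt
  constructor
  · apply div_nonneg _ (by positivity)
    exact Finset.sum_nonneg fun m _ => indicator_one_nonneg S _
  · rcases Nat.eq_zero_or_pos (Φ N).card with h | h
    · rw [h]; simp
    · rw [div_le_one (by exact_mod_cast h)]
      exact sum_indicator_le_card _ _ (fun x => indicator_one_le_one S _)

lemma cnt_univ (Φ : ℕ → Finset ℕ) (hne : ∀ N, (Φ N).Nonempty) (E : Set ℕ) (N : ℕ) :
    cnt Φ E Set.univ N = 1 := by
  unfold cnt
  rw [Set.indicator_univ]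
  rw [Finset.sum_const, nsmul_eq_mul, mul_one]
  exact div_self (by exact_mod_cast (Finset.card_pos.2 (hne N)).ne')

lemma cnt_mono (Φ : ℕ → Finset ℕ) (E : Set ℕ) {S T : Set CSp} (h : S ⊆ T) (N : ℕ) :
    cnt Φ E S N ≤ cnt Φ E T N := by
  unfold cnt
  rcases Nat.eq_zero_or_pos (Φ N).card with hc | hc
  · rw [hc]; simp
  · have hnum : (∑ m ∈ Φ N, Set.indicator S (fun _ => (1 : ℝ)) (embX E m))
        ≤ ∑ m ∈ Φ N, Set.indicator T (fun _ => (1 : ℝ)) (embX E m) :=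
      Finset.sum_le_sum fun m _ =>
        Set.indicator_le_indicator_of_subset h (fun _ => zero_le_one) _
    have hcpos : (0 : ℝ) < ((Φ N).card : ℝ) := by exact_mod_cast hc
    exact div_le_div_of_nonneg_right hnum hcpos.le |>.trans_eq rfl

lemma cnt_union (Φ : ℕ → Finset ℕ) (E : Set ℕ) {S T : Set CSp} (h : Disjoint S T) (N : ℕ) :
    cnt Φ E (S ∪ T) N = cnt Φ E S N + cnt Φ E T N := by
  unfold cnt
  rw [← add_div]
  congr 1
  rw [← Finset.sum_add_distrib]
  refine Finset.sum_congr rfl fun m _ => ?_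
  have := Set.indicator_union_of_disjoint h (fun _ : CSp => (1 : ℝ))
  exact congrFun this (embX E m)

lemma cnt_subadd (Φ : ℕ → Finset ℕ) (E : Set ℕ) (S T : Set CSp) (N : ℕ) :
    cnt Φ E (S ∪ T) N ≤ cnt Φ E S N + cnt Φ E T N := by
  unfold cnt
  rw [← add_div]
  rcases Nat.eq_zero_or_pos (Φ N).card with hc | hc
  · rw [hc]; simp
  · have hcpos : (0 : ℝ) < ((Φ N).card : ℝ) := by exact_mod_cast hc
    refine div_le_div_of_nonneg_right ?_ hcpos.le
    rw [← Finset.sum_add_distrib]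
    refine Finset.sum_le_sum fun m _ => ?_
    by_cases hS : embX E m ∈ S
    · rw [Set.indicator_of_mem hS]
      have h1 : Set.indicator (S ∪ T) (fun _ => (1 : ℝ)) (embX E m) = 1 :=
        Set.indicator_of_mem (Set.mem_union_left _ hS) _
      have h2 := indicator_one_nonneg T (embX E m)
      rw [h1]; linarith
    · by_cases hT : embX E m ∈ T
      · rw [Set.indicator_of_mem hT]
        have h1 : Set.indicator (S ∪ T) (fun _ => (1 : ℝ)) (embX E m) = 1 :=
          Set.indicator_of_mem (Set.mem_union_right _ hT) _
        have h2 := indicator_one_nonneg S (embX E m)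
        rw [h1]; linarith
      · have h1 : Set.indicator (S ∪ T) (fun _ => (1 : ℝ)) (embX E m) = 0 :=
          Set.indicator_of_notMem (fun hx => hx.elim hS hT) _
        have h2 := indicator_one_nonneg S (embX E m)
        have h3 := indicator_one_nonneg T (embX E m)
        rw [h1]; linarith

lemma cnt_eq_indicator (Φ : ℕ → Finset ℕ) (E : Set ℕ) (S : Set CSp) (F : Set ℕ)
    (h : ∀ m, embX E m ∈ S ↔ m ∈ F) (N : ℕ) :
    cnt Φ E S N = (∑ m ∈ Φ N, Set.indicator F (fun _ => (1 : ℝ)) m) / ((Φ N).card : ℝ) := by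
  unfold cnt
  congr 1
  refine Finset.sum_congr rfl fun m _ => ?_
  by_cases hm : m ∈ F
  · rw [Set.indicator_of_mem ((h m).2 hm), Set.indicator_of_mem hm]
  · rw [Set.indicator_of_notMem (fun hx => hm ((h m).1 hx)),
      Set.indicator_of_notMem hm]

lemma sum_sub_sum_le (A B : Finset ℕ) (g : ℕ → ℝ) (h0 : ∀ x, 0 ≤ g x) (h1 : ∀ x, g x ≤ 1) :
    (∑ m ∈ A, g m) - (∑ m ∈ B, g m) ≤ ((A ∆ B).card : ℝ) := by
  have hA : ∑ m ∈ A ∩ B, g m + ∑ m ∈ A \ B, g m = ∑ m ∈ A, g m :=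
    Finset.sum_inter_add_sum_sdiff A B g
  have hB : ∑ m ∈ A ∩ B, g m ≤ ∑ m ∈ B, g m :=
    Finset.sum_le_sum_of_subset_of_nonneg Finset.inter_subset_right (fun i _ _ => h0 i)
  have hD : (∑ m ∈ A \ B, g m) ≤ ((A \ B).card : ℝ) := sum_indicator_le_card _ _ h1
  have hsub : ((A \ B).card : ℝ) ≤ ((A ∆ B).card : ℝ) := by
    have : A \ B ⊆ A ∆ B := by
      intro x hx
      rw [Finset.mem_symmDiff]
      rw [Finset.mem_sdiff] at hx
      exact Or.inl hx
    exact_mod_cast Finset.card_le_card this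
  linarith

lemma abs_sum_sub_sum_le (A B : Finset ℕ) (g : ℕ → ℝ) (h0 : ∀ x, 0 ≤ g x)
    (h1 : ∀ x, g x ≤ 1) :
    |(∑ m ∈ A, g m) - (∑ m ∈ B, g m)| ≤ ((A ∆ B).card : ℝ) := by
  rw [abs_sub_le_iff]
  constructor
  · exact sum_sub_sum_le A B g h0 h1
  · have := sum_sub_sum_le B A g h0 h1
    rwa [symmDiff_comm] at this

lemma cnt_TX_preimage (Φ : ℕ → Finset ℕ) (E : Set ℕ) (a : ℕ) (ha : 0 < a) (S : Set CSp)
    (N : ℕ) :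
    |cnt Φ E (TX ⟨(a : ℚ), by exact_mod_cast ha⟩ ⁻¹' S) N - cnt Φ E S N|
      ≤ ((((Φ N).image (a * ·)) ∆ (Φ N)).card : ℝ) / ((Φ N).card : ℝ) := by
  set g : ℕ → ℝ := fun m => Set.indicator S (fun _ => (1 : ℝ)) (embX E m) with hg
  have hg0 : ∀ x, 0 ≤ g x := fun x => indicator_one_nonneg S _
  have hg1 : ∀ x, g x ≤ 1 := fun x => indicator_one_le_one S _
  have hnum : (∑ m ∈ Φ N, Set.indicator (TX ⟨(a : ℚ), by exact_mod_cast ha⟩ ⁻¹' S)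
      (fun _ => (1 : ℝ)) (embX E m)) = ∑ m ∈ (Φ N).image (a * ·), g m := by
    rw [Finset.sum_image (fun x _ y _ h => Nat.eq_of_mul_eq_mul_left ha h)]
    refine Finset.sum_congr rfl fun m _ => ?_
    have hmem : embX E m ∈ TX ⟨(a : ℚ), by exact_mod_cast ha⟩ ⁻¹' S ↔ embX E (a * m) ∈ S := by
      rw [Set.mem_preimage, TX_embX E a ha m]
    by_cases hm : embX E (a * m) ∈ S
    · rw [Set.indicator_of_mem (hmem.2 hm), hg]
      simp only
      rw [Set.indicator_of_mem hm]
    · rw [Set.indicator_of_notMem (fun hx => hm (hmem.1 hx)), hg]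
      simp only
      rw [Set.indicator_of_notMem hm]
  rcases Nat.eq_zero_or_pos (Φ N).card with hc | hc
  · unfold cnt
    rw [hc]
    simp only [Nat.cast_zero, div_zero, sub_zero, sub_self, abs_zero]
    positivity
  · have hcpos : (0 : ℝ) < ((Φ N).card : ℝ) := by exact_mod_cast hc
    unfold cnt
    rw [hnum, div_sub_div_same, abs_div, abs_of_pos hcpos]
    apply div_le_div_of_nonneg_right _ hcpos.le
    exact abs_sum_sub_sum_le _ _ g hg0 hg1

lemma exists_ultrafilter_tendsto_limsup (f : ℕ → ℝ) (h : ∀ n, f n ∈ Set.Icc (0 : ℝ) 1) :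
    ∃ 𝒰 : Ultrafilter ℕ, (𝒰 : Filter ℕ) ≤ Filter.atTop ∧
      Filter.Tendsto f 𝒰 (nhds (Filter.limsup f Filter.atTop)) := by
  set d := Filter.limsup f Filter.atTop with hd
  have hbdd : Filter.IsBoundedUnder (· ≤ ·) Filter.atTop f :=
    Filter.isBoundedUnder_of ⟨1, fun n => (h n).2⟩
  have hbdd' : Filter.IsBoundedUnder (· ≥ ·) Filter.atTop f :=
    Filter.isBoundedUnder_of ⟨0, fun n => (h n).1⟩
  have hcob : Filter.IsCoboundedUnder (· ≤ ·) Filter.atTop f :=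
    hbdd'.isCoboundedUnder_le
  have hfreq : ∀ U ∈ 𝓝 d, ∃ᶠ N in Filter.atTop, f N ∈ U := by
    intro U hU
    obtain ⟨ε, hε, hball⟩ := Metric.mem_nhds_iff.1 hU
    have h1 : ∃ᶠ N in Filter.atTop, d - ε < f N :=
      Filter.frequently_lt_of_lt_limsup hcob (by rw [← hd]; linarith)
    have h2 : ∀ᶠ N in Filter.atTop, f N < d + ε :=
      Filter.eventually_lt_of_limsup_lt (by rw [← hd]; linarith) hbdd
    refine (h1.and_eventually h2).mono fun N hN => hball ?_
    rw [Real.ball_eq_Ioo]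
    exact ⟨hN.1, hN.2⟩
  have hne : Filter.NeBot (Filter.atTop ⊓ Filter.comap f (𝓝 d)) := by
    rw [Filter.inf_neBot_iff]
    intro s hs t ht
    obtain ⟨U, hU, hUt⟩ := Filter.mem_comap.1 ht
    have hsev : ∀ᶠ x in Filter.atTop, x ∈ s := hs
    obtain ⟨N, hNU, hNs⟩ := ((hfreq U hU).and_eventually hsev).exists
    exact ⟨N, hNs, hUt hNU⟩
  refine ⟨Ultrafilter.of (Filter.atTop ⊓ Filter.comap f (𝓝 d)), ?_, ?_⟩
  · exact (Ultrafilter.of_le _).trans inf_le_left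
  · have hle := (Ultrafilter.of_le _).trans
      (inf_le_right : Filter.atTop ⊓ Filter.comap f (𝓝 d) ≤ _)
    exact Filter.tendsto_iff_comap.2 hle

lemma lim_le_limsup {𝒰 : Ultrafilter ℕ} (h𝒰 : (𝒰 : Filter ℕ) ≤ Filter.atTop) {f : ℕ → ℝ}
    {x : ℝ} (hf : ∀ n, f n ∈ Set.Icc (0 : ℝ) 1)
    (hx : Filter.Tendsto f 𝒰 (nhds x)) :
    x ≤ Filter.limsup f Filter.atTop := by
  by_contra hlt
  push_neg at hlt
  set c := (Filter.limsup f Filter.atTop + x) / 2 with hc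
  have h1 : Filter.limsup f Filter.atTop < c := by rw [hc]; linarith
  have h2 : c < x := by rw [hc]; linarith
  have hev : ∀ᶠ N in Filter.atTop, f N < c :=
    Filter.eventually_lt_of_limsup_lt h1 (Filter.isBoundedUnder_of ⟨1, fun n => (hf n).2⟩)
  have hev' : ∀ᶠ N in (𝒰 : Filter ℕ), f N ≤ c :=
    (hev.mono fun N hN => hN.le).filter_mono h𝒰
  have := le_of_tendsto hx hev'
  linarith

/-- Build a content on `CSp` from a finitely additive normalized set function. -/
noncomputable def mkContent (L : Set CSp → ℝ) (h0 : ∀ S, 0 ≤ L S)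
    (hmono : ∀ S T : Set CSp, S ⊆ T → L S ≤ L T)
    (hadd : ∀ S T : Set CSp, Disjoint S T → L (S ∪ T) = L S + L T)
    (hsub : ∀ S T : Set CSp, L (S ∪ T) ≤ L S + L T) : Content CSp where
  toFun K := ⟨L K.1, h0 _⟩
  mono' K₁ K₂ h := hmono _ _ h
  sup_disjoint' K₁ K₂ hd _ _ := by
    apply NNReal.coe_injective
    exact (hadd _ _ hd).trans (NNReal.coe_add (⟨L K₁.1, h0 _⟩ : ℝ≥0) (⟨L K₂.1, h0 _⟩ : ℝ≥0)).symm
  sup_le' K₁ K₂ := by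
    exact NNReal.coe_le_coe.1 ((hsub _ _).trans_eq (NNReal.coe_add (⟨L K₁.1, h0 _⟩ : ℝ≥0) (⟨L K₂.1, h0 _⟩ : ℝ≥0)).symm)

lemma mkContent_measure_clopen (L : Set CSp → ℝ) (h0 : ∀ S, 0 ≤ L S)
    (hmono : ∀ S T : Set CSp, S ⊆ T → L S ≤ L T)
    (hadd : ∀ S T : Set CSp, Disjoint S T → L (S ∪ T) = L S + L T)
    (hsub : ∀ S T : Set CSp, L (S ∪ T) ≤ L S + L T)
    {S : Set CSp} (hS : IsClopen S) :
    (mkContent L h0 hmono hadd hsub).measure S = ENNReal.ofReal (L S) := by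
  rw [Content.measure_apply _ hS.isOpen.measurableSet,
    (mkContent L h0 hmono hadd hsub).outerMeasure_of_isOpen S hS.isOpen,
    Content.innerContent_of_isCompact _ hS.isClosed.isCompact hS.isOpen]
  change ((mkContent L h0 hmono hadd hsub).toFun ⟨S, hS.isClosed.isCompact⟩ : ℝ≥0∞) = _
  have hto : (mkContent L h0 hmono hadd hsub).toFun ⟨S, hS.isClosed.isCompact⟩
      = Real.toNNReal (L S) := by
    refine NNReal.coe_injective ?_
    rw [Real.coe_toNNReal _ (h0 S)]
    rfl
  rw [hto]
  rfl

lemma clopen_of_mem_cylinders {C : Set CSp}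
    (hC : C ∈ measurableCylinders (fun _ : PosQ => Bool)) : IsClopen C := by
  obtain ⟨s, t, _, rfl⟩ := (mem_measurableCylinders C).1 hC
  exact (isClopen_discrete t).preimage (continuous_pi fun i => continuous_apply _)

end FurstenbergAux

/-- Furstenberg correspondence principle for the multiplicative semigroup: given a
multiplicative Følner sequence `Φ` and `E ⊆ ℕ`, there are a measure-preserving action `T`
of `(ℚ⁺, ·)` on a probability space `(X, μ)` and a measurable set `A` with
`μ(A) = d_mult(E)`, such that for all `n₁, …, n_k ∈ ℕ`,
`d_mult(n₁⁻¹E ∩ … ∩ n_k⁻¹E) ≥ μ(T_{n₁}⁻¹A ∩ … ∩ T_{n_k}⁻¹A)`. -/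
theorem stmt15 (Φ : ℕ → Finset ℕ)
    (hne : ∀ N, (Φ N).Nonempty)
    (hmono : ∀ N, Φ N ⊆ Φ (N + 1))
    (hFolner : ∀ a : ℕ, 0 < a →
      Filter.Tendsto
        (fun N => ((((Φ N).image (a * ·)) ∆ (Φ N)).card : ℝ) / (Φ N).card)
        Filter.atTop (nhds 0))
    (E : Set ℕ) (hE : 0 < multDensity Φ E) :
    ∃ (X : Type) (_ : MeasurableSpace X) (μ : Measure X) (_ : IsProbabilityMeasure μ)
      (T : {q : ℚ // 0 < q} → X → X),
      (∀ q, MeasurePreserving (T q) μ μ) ∧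
      (T 1 = id) ∧
      (∀ q q', T (q * q') = T q ∘ T q') ∧
      ∃ A : Set X, MeasurableSet A ∧ (μ A).toReal = multDensity Φ E ∧
        ∀ (k : ℕ) (n : Fin k → ℕ) (hn : ∀ i, 0 < n i),
          (μ (⋂ i, T ⟨((n i : ℕ) : ℚ), by exact_mod_cast hn i⟩ ⁻¹' A)).toReal ≤
            multDensity Φ (⋂ i, {m : ℕ | n i * m ∈ E}) := by
  classical
  -- the density of `E` equals the limsup of the empirical densities of `AX`
  have hlimeq : multDensity Φ E = Filter.limsup (cnt Φ E AX) Filter.atTop := by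
    unfold multDensity
    congr 1
    funext N
    exact (cnt_eq_indicator Φ E AX E (embX_mem_AX E) N).symm
  -- choose an ultrafilter realizing the limsup
  obtain ⟨𝒰, h𝒰le, h𝒰tend⟩ :=
    exists_ultrafilter_tendsto_limsup (cnt Φ E AX) (cnt_mem Φ E AX)
  -- limits of empirical densities along the ultrafilter
  have hLex : ∀ S : Set CSp, ∃ x, x ∈ Set.Icc (0 : ℝ) 1 ∧
      Filter.Tendsto (cnt Φ E S) 𝒰 (nhds x) := by
    intro S
    have hmem : (Ultrafilter.map (cnt Φ E S) 𝒰 : Filter ℝ) ≤ Filter.principal (Set.Icc 0 1) := by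
      rw [Ultrafilter.coe_map, Filter.le_principal_iff, Filter.mem_map]
      exact Filter.Eventually.of_forall fun N => cnt_mem Φ E S N
    obtain ⟨x, hx, hxle⟩ :=
      (isCompact_Icc (a := (0 : ℝ)) (b := 1)).ultrafilter_le_nhds
        (Ultrafilter.map (cnt Φ E S) 𝒰) hmem
    exact ⟨x, hx, hxle⟩
  set L : Set CSp → ℝ := fun S => (hLex S).choose with hLdef
  have hL0 : ∀ S, 0 ≤ L S := fun S => (hLex S).choose_spec.1.1
  have hLt : ∀ S, Filter.Tendsto (cnt Φ E S) 𝒰 (nhds (L S)) :=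
    fun S => (hLex S).choose_spec.2
  -- basic properties of L
  have hLmono : ∀ S T : Set CSp, S ⊆ T → L S ≤ L T := fun S T h =>
    le_of_tendsto_of_tendsto' (hLt S) (hLt T) (fun N => cnt_mono Φ E h N)
  have hLadd : ∀ S T : Set CSp, Disjoint S T → L (S ∪ T) = L S + L T := by
    intro S T h
    refine tendsto_nhds_unique (hLt (S ∪ T)) ?_
    have : Filter.Tendsto (fun N => cnt Φ E S N + cnt Φ E T N) 𝒰 (nhds (L S + L T)) :=
      (hLt S).add (hLt T)
    refine this.congr fun N => ?_
    exact (cnt_union Φ E h N).symm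
  have hLsub : ∀ S T : Set CSp, L (S ∪ T) ≤ L S + L T := fun S T =>
    le_of_tendsto_of_tendsto' (hLt (S ∪ T)) ((hLt S).add (hLt T))
      (fun N => cnt_subadd Φ E S T N)
  have hLuniv : L Set.univ = 1 := by
    refine tendsto_nhds_unique (hLt Set.univ) ?_
    have : Filter.Tendsto (fun _ : ℕ => (1 : ℝ)) 𝒰 (nhds 1) := tendsto_const_nhds
    exact this.congr fun N => (cnt_univ Φ hne E N).symm
  -- invariance of L under TX by positive naturals
  have hLinv : ∀ (a : ℕ) (ha : 0 < a) (S : Set CSp),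
      L (TX ⟨(a : ℚ), by exact_mod_cast ha⟩ ⁻¹' S) = L S := by
    intro a ha S
    refine tendsto_nhds_unique (hLt _) ?_
    have hdiff : Filter.Tendsto
        (fun N => cnt Φ E (TX ⟨(a : ℚ), by exact_mod_cast ha⟩ ⁻¹' S) N - cnt Φ E S N)
        𝒰 (nhds 0) := by
      have hbound : ∀ N,
          |cnt Φ E (TX ⟨(a : ℚ), by exact_mod_cast ha⟩ ⁻¹' S) N - cnt Φ E S N|
            ≤ ((((Φ N).image (a * ·)) ∆ (Φ N)).card : ℝ) / ((Φ N).card : ℝ) :=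
        fun N => cnt_TX_preimage Φ E a ha S N
      have hF : Filter.Tendsto
          (fun N => ((((Φ N).image (a * ·)) ∆ (Φ N)).card : ℝ) / ((Φ N).card : ℝ))
          𝒰 (nhds 0) := (hFolner a ha).mono_left h𝒰le
      exact squeeze_zero_norm hbound hF
    have := (hLt S).add hdiff
    rw [add_zero] at this
    refine this.congr fun N => ?_
    ring
  -- the content and its measure
  set κ := mkContent L hL0 hLmono hLadd hLsub with hκ
  have hclopen : ∀ {S : Set CSp}, IsClopen S →
      κ.measure S = ENNReal.ofReal (L S) := by
    intro S hS
    exact mkContent_measure_clopen L hL0 hLmono hLadd hLsub hS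
  have hprob : IsProbabilityMeasure κ.measure := by
    constructor
    rw [hclopen isClopen_univ, hLuniv, ENNReal.ofReal_one]
  -- measure preservation by positive naturals
  have hmapnat : ∀ (q' : PosQ) (a : ℕ), 0 < a → (q' : ℚ) = (a : ℚ) →
      Measure.map (TX q') κ.measure = κ.measure := by
    intro q' a ha hval
    have hq' : q' = ⟨(a : ℚ), by exact_mod_cast ha⟩ := Subtype.ext hval
    subst hq'
    haveI := hprob
    haveI : IsProbabilityMeasure
        (Measure.map (TX ⟨(a : ℚ), by exact_mod_cast ha⟩) κ.measure) :=
      Measure.isProbabilityMeasure_map ((TX_continuous _).measurable.aemeasurable)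
    refine ext_of_generate_finite (measurableCylinders (fun _ : PosQ => Bool))
      generateFrom_measurableCylinders.symm isPiSystem_measurableCylinders ?_ ?_
    · intro C hC
      have hCc : IsClopen C := clopen_of_mem_cylinders hC
      rw [Measure.map_apply (TX_continuous _).measurable hCc.isOpen.measurableSet]
      rw [hclopen (hCc.preimage (TX_continuous _)), hclopen hCc, hLinv a ha C]
    · rw [Measure.map_apply (TX_continuous _).measurable MeasurableSet.univ,
        Set.preimage_univ]
  -- measure preservation for all positive rationals
  have hmp : ∀ q : PosQ, MeasurePreserving (TX q) κ.measure κ.measure := by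
    intro q
    refine ⟨(TX_continuous q).measurable, ?_⟩
    set a : ℕ := q.1.num.toNat with hadef
    have hnum : 0 < q.1.num := Rat.num_pos.2 q.2
    have ha : 0 < a := by rw [hadef]; omega
    set qa : PosQ := ⟨(a : ℚ), by exact_mod_cast ha⟩ with hqa
    set qb : PosQ := ⟨(q.1.den : ℚ), by exact_mod_cast q.1.pos⟩ with hqb
    have hq : q = qa * qb⁻¹ := by
      apply Subtype.ext
      show (q : ℚ) = (a : ℚ) * ((q.1.den : ℚ))⁻¹
      have h1 : ((a : ℕ) : ℚ) = ((q.1.num : ℤ) : ℚ) := by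
        rw [hadef]
        exact_mod_cast congrArg (fun z : ℤ => (z : ℚ)) (Int.toNat_of_nonneg hnum.le)
      rw [h1, ← div_eq_mul_inv]
      exact (Rat.num_div_den q.1).symm
    have hbinv : Measure.map (TX qb⁻¹) κ.measure = κ.measure := by
      have hb : Measure.map (TX qb) κ.measure = κ.measure :=
        hmapnat qb q.1.den q.1.pos rfl
      conv_lhs => rw [← hb]
      rw [Measure.map_map (TX_continuous _).measurable (TX_continuous _).measurable,
        ← TX_mul, inv_mul_cancel, TX_one, Measure.map_id]
    rw [hq, TX_mul,
      ← Measure.map_map (TX_continuous qa).measurable (TX_continuous qb⁻¹).measurable,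
      hbinv]
    exact hmapnat qa a ha rfl
  -- the distinguished set
  have hAmeas : MeasurableSet AX := AX_clopen.isOpen.measurableSet
  have hLAX : L AX = multDensity Φ E := by
    rw [hlimeq]
    exact tendsto_nhds_unique (hLt AX) h𝒰tend
  refine ⟨CSp, inferInstance, κ.measure, hprob, TX, hmp, TX_one, TX_mul, AX, hAmeas, ?_, ?_⟩
  · rw [hclopen AX_clopen, ENNReal.toReal_ofReal (hL0 _)]
    exact hLAX
  · intro k n hn
    set S : Set CSp := ⋂ i, TX ⟨((n i : ℕ) : ℚ), by exact_mod_cast hn i⟩ ⁻¹' AX with hS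
    have hSclopen : IsClopen S := by
      constructor
      · exact isClosed_iInter fun i => (AX_clopen.preimage (TX_continuous _)).isClosed
      · exact isOpen_iInter_of_finite fun i => (AX_clopen.preimage (TX_continuous _)).isOpen
    have hmem : ∀ m, (embX E m ∈ S ↔ m ∈ ⋂ i, {m' : ℕ | n i * m' ∈ E}) := by
      intro m
      rw [hS]
      simp only [Set.mem_iInter, Set.mem_preimage, Set.mem_setOf_eq]
      refine forall_congr' fun i => ?_
      rw [TX_embX E (n i) (hn i) m]
      exact embX_mem_AX E _
    have hcnt : ∀ N, cnt Φ E S N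
        = (∑ m ∈ Φ N, Set.indicator (⋂ i, {m' : ℕ | n i * m' ∈ E})
            (fun _ => (1 : ℝ)) m) / ((Φ N).card : ℝ) :=
      cnt_eq_indicator Φ E S _ hmem
    have hdens : multDensity Φ (⋂ i, {m' : ℕ | n i * m' ∈ E})
        = Filter.limsup (cnt Φ E S) Filter.atTop := by
      unfold multDensity
      congr 1
      funext N
      exact (hcnt N).symm
    rw [hclopen hSclopen, ENNReal.toReal_ofReal (hL0 _)]
    show L S ≤ multDensity Φ (⋂ i, {m' : ℕ | n i * m' ∈ E})
    rw [hdens]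
    exact lim_le_limsup h𝒰le (cnt_mem Φ E S) (hLt S)
end
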